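/- Suppose a group 𝔾 acts by homeomorphisms (T_g) on a compact metric space (X, d) with a fixed point x₀ (T_g x₀ = x₀ for all g). If for every x ∈ X and ε > 0 the set {g ∈ 𝔾 : d(T_g x, x₀) < ε} is syndetic, then for every pair x, y ∈ X and ε > 0 the set {g : d(T_g x, T_g y) < ε} is syndetic; in particular the action is proximal: for all x, y, inf_g d(T_g x, T_g y) = 0. -/

import Mathlib

/-- A subset `S` of a topological additive group is syndetic if `K + S = 𝔾` for some
compact `K`. -/
def Syndetic {G : Type*} [AddCommGroup G] [TopologicalSpace G] (S : Set G) : Prop :=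
  ∃ K : Set G, IsCompact K ∧ ∀ g : G, ∃ k ∈ K, ∃ s ∈ S, g = k + s

/-- if a group of homeomorphisms of a compact metric space has a fixed
point `x₀` and every point returns `ε`-close to `x₀` along a syndetic set, then every pair
of points comes `ε`-close along a syndetic set; in particular the action is proximal. -/
theorem stmt17 {G X : Type*} [AddCommGroup G] [TopologicalSpace G] [IsTopologicalAddGroup G]
    [LocallyCompactSpace G] [NoncompactSpace G]
    [MetricSpace X] [CompactSpace X]
    (T : G → X ≃ₜ X) (hT : ∀ g h x, T (g + h) x = T g (T h x))
    (x₀ : X) (hfix : ∀ g, T g x₀ = x₀)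
    (hsynd : ∀ (x : X) (ε : ℝ), 0 < ε → Syndetic {g : G | dist (T g x) x₀ < ε}) :
    (∀ (x y : X) (ε : ℝ), 0 < ε → Syndetic {g : G | dist (T g x) (T g y) < ε}) ∧
    (∀ (x y : X) (ε : ℝ), 0 < ε → ∃ g : G, dist (T g x) (T g y) < ε) := by
  -- Step 0: syndetic return sets are in particular nonempty.
  have hne : ∀ (x : X) (ε : ℝ), 0 < ε → ∃ g : G, dist (T g x) x₀ < ε := by
    intro x ε hε
    obtain ⟨K, -, hK⟩ := hsynd x ε hε
    obtain ⟨k, -, s, hs, -⟩ := hK 0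
    exact ⟨s, hs⟩
  -- Step 1 (joint recurrence): every pair comes jointly close to x₀.
  have joint : ∀ (x y : X) (ε : ℝ), 0 < ε →
      ∃ g : G, dist (T g x) x₀ < ε ∧ dist (T g y) x₀ < ε := by
    intro x y ε hε
    set C := closure (Set.range (fun g : G => ((T g x : X), (T g y : X)))) with hCdef
    have hCcomp : IsCompact C := isClosed_closure.isCompact
    -- x₀ lies in the first projection of C
    have hx₀ : x₀ ∈ Prod.fst '' C := by
      have hclosed : IsClosed (Prod.fst '' C) := (hCcomp.image continuous_fst).isClosed
      have hsub : Set.range (fun g : G => (T g x : X)) ⊆ Prod.fst '' C := by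
        rintro - ⟨g, rfl⟩
        exact ⟨(T g x, T g y), subset_closure ⟨g, rfl⟩, rfl⟩
      have hmem : x₀ ∈ closure (Set.range fun g : G => (T g x : X)) := by
        rw [Metric.mem_closure_iff]
        intro δ hδ
        obtain ⟨g, hg⟩ := hne x δ hδ
        exact ⟨T g x, ⟨g, rfl⟩, by rwa [dist_comm]⟩
      exact hclosed.closure_subset_iff.mpr hsub hmem
    obtain ⟨p, hpC, hfst⟩ := hx₀
    set v := p.2 with hv
    have hvC : (x₀, v) ∈ C := by
      have : p = (x₀, v) := by
        rw [← hfst, hv]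
      rwa [← this]
    -- bring v close to x₀
    obtain ⟨g₁, hg₁⟩ := hne v (ε / 2) (by linarith)
    -- continuity of T g₁ at x₀ and at v
    have hcx₀ : ContinuousAt (fun z : X => (T g₁ z : X)) x₀ := (T g₁).continuous.continuousAt
    have hcv : ContinuousAt (fun z : X => (T g₁ z : X)) v := (T g₁).continuous.continuousAt
    rw [Metric.continuousAt_iff] at hcx₀ hcv
    obtain ⟨δ₁, hδ₁pos, hδ₁⟩ := hcx₀ ε hε
    obtain ⟨δ₂, hδ₂pos, hδ₂⟩ := hcv (ε / 2) (by linarith)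
    -- find an actual orbit point close to (x₀, v)
    rw [Metric.mem_closure_iff] at hvC
    obtain ⟨b, ⟨g₂, rfl⟩, hb⟩ := hvC (min δ₁ δ₂) (lt_min hδ₁pos hδ₂pos)
    rw [Prod.dist_eq] at hb
    have hb1 : dist (T g₂ x) x₀ < δ₁ := by
      rw [dist_comm]
      exact lt_of_le_of_lt (le_max_left _ _) (lt_of_lt_of_le hb (min_le_left _ _))
    have hb2 : dist (T g₂ y) v < δ₂ := by
      rw [dist_comm]
      exact lt_of_le_of_lt (le_max_right _ _) (lt_of_lt_of_le hb (min_le_right _ _))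
    refine ⟨g₁ + g₂, ?_, ?_⟩
    · rw [hT g₁ g₂ x]
      have := hδ₁ hb1
      simpa [hfix g₁] using this
    · rw [hT g₁ g₂ y]
      calc dist (T g₁ (T g₂ y)) x₀
          ≤ dist (T g₁ (T g₂ y)) (T g₁ v) + dist (T g₁ v) x₀ := dist_triangle _ _ _
        _ < ε / 2 + ε / 2 := add_lt_add (hδ₂ hb2) hg₁
        _ = ε := by ring
  -- Step 2: a finite uniform family of group elements bringing every pair close to x₀.
  have unif : ∀ ε : ℝ, 0 < ε → ∃ F : Finset G, ∀ u v : X, ∃ g ∈ F,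
      dist (T g u) x₀ < ε ∧ dist (T g v) x₀ < ε := by
    intro ε hε
    have hopen : ∀ g : G, IsOpen {p : X × X | dist (T g p.1) x₀ < ε ∧ dist (T g p.2) x₀ < ε} := by
      intro g
      have h1 : IsOpen {p : X × X | dist (T g p.1) x₀ < ε} :=
        isOpen_lt (Continuous.dist ((T g).continuous.comp continuous_fst) continuous_const)
          continuous_const
      have h2 : IsOpen {p : X × X | dist (T g p.2) x₀ < ε} :=
        isOpen_lt (Continuous.dist ((T g).continuous.comp continuous_snd) continuous_const)
          continuous_const
      exact h1.inter h2
    have hcover : (Set.univ : Set (X × X)) ⊆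
        ⋃ g : G, {p : X × X | dist (T g p.1) x₀ < ε ∧ dist (T g p.2) x₀ < ε} := by
      rintro ⟨u, v⟩ -
      obtain ⟨g, h1, h2⟩ := joint u v ε hε
      exact Set.mem_iUnion.mpr ⟨g, h1, h2⟩
    obtain ⟨F, hF⟩ := isCompact_univ.elim_finite_subcover _ hopen hcover
    refine ⟨F, fun u v => ?_⟩
    have := hF (Set.mem_univ (u, v))
    simp only [Set.mem_iUnion] at this
    obtain ⟨g, hgF, h1, h2⟩ := this
    exact ⟨g, hgF, h1, h2⟩
  constructor
  · -- syndeticity of pair return sets, with a finite (hence compact) K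
    intro x y ε hε
    obtain ⟨F, hF⟩ := unif (ε / 2) (by linarith)
    refine ⟨(fun g : G => -g) '' (F : Set G), (F.finite_toSet.image _).isCompact, fun g => ?_⟩
    obtain ⟨h, hhF, h1, h2⟩ := hF (T g x) (T g y)
    refine ⟨-h, ⟨h, hhF, rfl⟩, h + g, ?_, by abel⟩
    show dist (T (h + g) x) (T (h + g) y) < ε
    rw [hT h g x, hT h g y]
    calc dist (T h (T g x)) (T h (T g y))
        ≤ dist (T h (T g x)) x₀ + dist x₀ (T h (T g y)) := dist_triangle _ _ _
      _ < ε / 2 + ε / 2 := by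
          rw [dist_comm x₀]
          exact add_lt_add h1 h2
      _ = ε := by ring
  · -- proximality
    intro x y ε hε
    obtain ⟨g, h1, h2⟩ := joint x y (ε / 2) (by linarith)
    refine ⟨g, ?_⟩
    calc dist (T g x) (T g y) ≤ dist (T g x) x₀ + dist x₀ (T g y) := dist_triangle _ _ _
      _ < ε / 2 + ε / 2 := by
          rw [dist_comm x₀]
          exact add_lt_add h1 h2
      _ = ε := by ring
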